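/- Let H be a Hilbert algebra, A an implicative semilattice, and h : H → A a homomorphism into the {→,1}-reduct of A. Then there is a unique implicative-semilattice homomorphism h̄ : L(H) → A with h = h̄ ∘ φ_H, where L(H) = (⟨φ_H[H]⟩, ∩, ⇒, X(H)). Consequently, the functor L : Hil → IS is left adjoint to the forgetful functor IS → Hil. -/

import Mathlib

namespace FH

variable {H : Type*}

/-- Hilbert algebra axioms for `(imp, one)`. -/
def IsHilbert (imp : H → H → H) (one : H) : Prop :=
  (∀ a b : H, imp a (imp b a) = one) ∧
  (∀ a b c : H, imp (imp a (imp b c)) (imp (imp a b) (imp a c)) = one) ∧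
  (∀ a b : H, imp a b = one → imp b a = one → a = b)

/-- The natural order of a Hilbert algebra. -/
def hle (imp : H → H → H) (one : H) (a b : H) : Prop := imp a b = one

/-- Implicative filter. -/
def IsImpFilter (imp : H → H → H) (one : H) (F : Set H) : Prop :=
  one ∈ F ∧ ∀ a b : H, a ∈ F → imp a b ∈ F → b ∈ F

/-- Irreducible implicative filter. -/
def IsIrr (imp : H → H → H) (one : H) (F : Set H) : Prop :=
  IsImpFilter imp one F ∧ F ≠ Set.univ ∧
    ∀ F1 F2 : Set H, IsImpFilter imp one F1 → IsImpFilter imp one F2 →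
      F = F1 ∩ F2 → (F = F1 ∨ F = F2)

/-- `φ(a) = {P ∈ X(H) : a ∈ P}`. -/
def phi (imp : H → H → H) (one : H) (a : H) : Set (Set H) :=
  {P | IsIrr imp one P ∧ a ∈ P}

/-- `X(H)`, the set of irreducible implicative filters. -/
def XH (imp : H → H → H) (one : H) : Set (Set H) := {P | IsIrr imp one P}

/-- Upsets of the poset `(X(H), ⊆)`. -/
def IsUp (imp : H → H → H) (one : H) (U : Set (Set H)) : Prop :=
  (∀ P ∈ U, IsIrr imp one P) ∧
    ∀ P Q : Set H, P ∈ U → IsIrr imp one Q → P ⊆ Q → Q ∈ U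

/-- Heyting implication `U ⇒ V` on upsets of `X(H)` (the complement relative to
`X(H)` of the downset generated by `U ∩ Vᶜ`). -/
def himp (imp : H → H → H) (one : H) (U V : Set (Set H)) : Set (Set H) :=
  {P | IsIrr imp one P ∧ ∀ Q : Set H, IsIrr imp one Q → P ⊆ Q → Q ∈ U → Q ∈ V}

/-- Frontal operator on a Hilbert algebra. -/
def IsFrontal (imp : H → H → H) (one : H) (t : H → H) : Prop :=
  (∀ a b : H, hle imp one (t (imp a b)) (imp (t a) (t b))) ∧
  (∀ a : H, hle imp one a (t a)) ∧
  (∀ a b : H, hle imp one (t a) (imp (imp (imp b a) b) b))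

/-- The elements of `⟨φ[H]⟩`: finite (nonempty) intersections `φ(a₁) ∩ ⋯ ∩ φ(aₙ)`. -/
def gen (imp : H → H → H) (one : H) (U : Set (Set H)) : Prop :=
  ∃ l : List H, l ≠ [] ∧ U = {P | IsIrr imp one P ∧ ∀ a ∈ l, a ∈ P}

/-- The π-extension `τ^π` of a unary map `t` to the upsets of `X(H)`. -/
def tpi (imp : H → H → H) (one : H) (t : H → H) (U : Set (Set H)) : Set (Set H) :=
  {P | IsIrr imp one P ∧ ∀ Q : Set H, IsIrr imp one Q → t ⁻¹' P ⊆ Q → Q ∈ U}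

/-- Maximal elements (w.r.t. inclusion) of a family of sets. -/
def Mx (S : Set (Set H)) : Set (Set H) := {P ∈ S | ∀ Q ∈ S, P ⊆ Q → P = Q}

/-- Relative complement in `X(H)`. -/
def Xc (imp : H → H → H) (one : H) (U : Set (Set H)) : Set (Set H) :=
  {P | IsIrr imp one P ∧ P ∉ U}

/-- Downset (within `X(H)`) generated by a family `S`. -/
def dn (imp : H → H → H) (one : H) (S : Set (Set H)) : Set (Set H) :=
  {P | IsIrr imp one P ∧ ∃ Q ∈ S, P ⊆ Q}

/-- Implicative semilattice axioms for `(inf, imp, one)`. -/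
def IsImpSL (inf : H → H → H) (imp : H → H → H) (one : H) : Prop :=
  (∀ a b : H, inf a b = inf b a) ∧
  (∀ a b c : H, inf (inf a b) c = inf a (inf b c)) ∧
  (∀ a : H, inf a a = a) ∧
  (∀ a : H, inf a one = a) ∧
  (∀ a b c : H, inf (inf a b) c = inf a b ↔ inf a (imp b c) = a)

/-- The semilattice order: `a ≤ b` iff `a ∧ b = a`. -/
def sle (inf : H → H → H) (a b : H) : Prop := inf a b = a

end FH

namespace FHAux
open FH
variable {H : Type*}

/-- Deduction from hypotheses `S` in the implicational calculus. -/
inductive Ded (imp : H → H → H) (S : Set H) : H → Prop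
  | hyp {a} : a ∈ S → Ded imp S a
  | ax1 (a b) : Ded imp S (imp a (imp b a))
  | ax2 (a b c) : Ded imp S (imp (imp a (imp b c)) (imp (imp a b) (imp a c)))
  | mp {a b} : Ded imp S a → Ded imp S (imp a b) → Ded imp S b

lemma ded_ii (imp : H → H → H) (S : Set H) (a : H) : Ded imp S (imp a a) := by
  have h1 : Ded imp S (imp a (imp (imp a a) a)) := Ded.ax1 a (imp a a)
  have h2 := Ded.ax2 (imp := imp) (S := S) a (imp a a) a
  have h3 := h1.mp h2
  exact (Ded.ax1 a a).mp h3

lemma ded_mono {imp : H → H → H} {S T : Set H} (hST : S ⊆ T) {b : H}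
    (hd : Ded imp S b) : Ded imp T b := by
  induction hd with
  | hyp h => exact Ded.hyp (hST h)
  | ax1 a b => exact Ded.ax1 a b
  | ax2 a b c => exact Ded.ax2 a b c
  | mp _ _ ih1 ih2 => exact ih1.mp ih2

/-- Deduction theorem. -/
lemma ded_dt {imp : H → H → H} {S : Set H} {a b : H}
    (hd : Ded imp (insert a S) b) : Ded imp S (imp a b) := by
  induction hd with
  | hyp h =>
    rcases h with h | h
    · subst h; exact ded_ii imp S _
    · exact (Ded.hyp h).mp (Ded.ax1 _ a)
  | ax1 x y => exact (Ded.ax1 x y).mp (Ded.ax1 _ a)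
  | ax2 x y z => exact (Ded.ax2 x y z).mp (Ded.ax1 _ a)
  | mp _ _ ih1 ih2 => exact ih1.mp (ih2.mp (Ded.ax2 a _ _))

lemma filter_ded_closed {imp : H → H → H} {one : H} (hH : IsHilbert imp one)
    {F S : Set H} (hF : IsImpFilter imp one F) (hS : ∀ x ∈ S, x ∈ F) {b : H}
    (hd : Ded imp S b) : b ∈ F := by
  induction hd with
  | hyp h => exact hS _ h
  | ax1 a b => rw [hH.1 a b]; exact hF.1
  | ax2 a b c => rw [hH.2.1 a b c]; exact hF.1
  | mp _ _ ih1 ih2 => exact hF.2 _ _ ih1 ih2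

lemma ded_filter {imp : H → H → H} {one : H} (hH : IsHilbert imp one) (S : Set H) :
    IsImpFilter imp one {x | Ded imp S x} := by
  constructor
  · have := Ded.ax1 (imp := imp) (S := S) one one
    rwa [hH.1 one one] at this
  · exact fun a b ha hab => ha.mp hab

lemma ded_foldr {imp : H → H → H} {b : H} :
    ∀ (l : List H) (S : Set H), Ded imp (S ∪ {x | x ∈ l}) b →
      Ded imp S (l.foldr imp b) := by
  intro l
  induction l with
  | nil => intro S h; exact ded_mono (by intro x hx; rcases hx with hx | hx; exact hx; simp at hx) h
  | cons a t ih =>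
    intro S h
    have h' : Ded imp (insert a S ∪ {x | x ∈ t}) b := by
      refine ded_mono ?_ h
      intro x hx
      rcases hx with hx | hx
      · exact Or.inl (Or.inr hx)
      · simp only [List.mem_cons] at hx
        rcases hx with hx | hx
        · exact Or.inl (Or.inl hx)
        · exact Or.inr hx
    exact ded_dt (ih (insert a S) h')

lemma foldr_mp {imp : H → H → H} {one : H} (hH : IsHilbert imp one)
    {F : Set H} (hF : IsImpFilter imp one F) {b : H} :
    ∀ l : List H, l.foldr imp b ∈ F → (∀ a ∈ l, a ∈ F) → b ∈ F := by
  intro l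
  induction l with
  | nil => intro h _; exact h
  | cons a t ih =>
    intro h hl
    exact ih (hF.2 _ _ (hl a (by simp)) h) (fun x hx => hl x (by simp [hx]))

/-- Separation: from non-deducibility to an irreducible filter. -/
lemma separation {imp : H → H → H} {one : H} (hH : IsHilbert imp one)
    {S : Set H} {b : H} (hb : ¬ Ded imp S b) :
    ∃ P : Set H, IsIrr imp one P ∧ (∀ x, Ded imp S x → x ∈ P) ∧ b ∉ P := by
  set D : Set H := {x | Ded imp S x} with hD
  set C : Set (Set H) := {F | IsImpFilter imp one F ∧ D ⊆ F ∧ b ∉ F} with hC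
  have hDC : D ∈ C := ⟨ded_filter hH S, subset_rfl, hb⟩
  have hub : ∀ c ⊆ C, IsChain (· ⊆ ·) c → c.Nonempty →
      ∃ ub ∈ C, ∀ s ∈ c, s ⊆ ub := by
    intro c hcC hchain hcne
    refine ⟨⋃₀ c, ⟨⟨?_, ?_⟩, ?_, ?_⟩, fun s hs => Set.subset_sUnion_of_mem hs⟩
    · obtain ⟨F, hF⟩ := hcne
      exact ⟨F, hF, (hcC hF).1.1⟩
    · rintro x y ⟨F1, hF1, hx⟩ ⟨F2, hF2, hxy⟩
      rcases hchain.total hF1 hF2 with hle | hle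
      · exact ⟨F2, hF2, (hcC hF2).1.2 _ _ (hle hx) hxy⟩
      · exact ⟨F1, hF1, (hcC hF1).1.2 _ _ hx (hle hxy)⟩
    · obtain ⟨F, hF⟩ := hcne
      exact ((hcC hF).2.1).trans (Set.subset_sUnion_of_mem hF)
    · rintro ⟨F, hF, hbF⟩
      exact (hcC hF).2.2 hbF
  obtain ⟨m, hDm, hmax⟩ := zorn_subset_nonempty C hub D hDC
  have hm : m ∈ C := hmax.prop
  refine ⟨m, ⟨hm.1, ?_, ?_⟩, fun x hx => hm.2.1 hx, hm.2.2⟩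
  · intro hu
    exact hm.2.2 (hu ▸ Set.mem_univ b)
  · intro F1 F2 hF1 hF2 hmeq
    by_contra hne
    push_neg at hne
    have hsub1 : m ⊆ F1 := hmeq ▸ Set.inter_subset_left
    have hsub2 : m ⊆ F2 := hmeq ▸ Set.inter_subset_right
    have hb1 : b ∈ F1 := by
      by_contra hbF
      exact hne.1 (hmax.eq_of_le ⟨hF1, hm.2.1.trans hsub1, hbF⟩ hsub1)
    have hb2 : b ∈ F2 := by
      by_contra hbF
      exact hne.2 (hmax.eq_of_le ⟨hF2, hm.2.1.trans hsub2, hbF⟩ hsub2)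
    exact hm.2.2 (by rw [hmeq]; exact ⟨hb1, hb2⟩)


/-- The generated-set shape. -/
def SS (imp : H → H → H) (one : H) (l : List H) : Set (Set H) :=
  {P | IsIrr imp one P ∧ ∀ a ∈ l, a ∈ P}

lemma ded_of_subset {imp : H → H → H} {one : H} (hH : IsHilbert imp one)
    {l : List H} {b : H}
    (h : SS imp one l ⊆ {P | IsIrr imp one P ∧ b ∈ P}) : Ded imp {x | x ∈ l} b := by
  by_contra hb
  obtain ⟨P, hirr, hcl, hbP⟩ := separation hH hb
  exact hbP (h ⟨hirr, fun a ha => hcl _ (Ded.hyp ha)⟩).2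

lemma subset_of_ded {imp : H → H → H} {one : H} (hH : IsHilbert imp one)
    {l : List H} {b : H} (hd : Ded imp {x | x ∈ l} b) :
    SS imp one l ⊆ {P | IsIrr imp one P ∧ b ∈ P} := fun P hP =>
  ⟨hP.1, filter_ded_closed hH hP.1.1 hP.2 hd⟩

lemma SS_inter (imp : H → H → H) (one : H) (l1 l2 : List H) :
    SS imp one l1 ∩ SS imp one l2 = SS imp one (l1 ++ l2) := by
  ext P
  simp only [SS, Set.mem_inter_iff, Set.mem_setOf_eq, List.mem_append]
  constructor
  · rintro ⟨⟨h1, h2⟩, ⟨_, h4⟩⟩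
    exact ⟨h1, fun a ha => ha.elim (h2 a) (h4 a)⟩
  · rintro ⟨h1, h2⟩
    exact ⟨⟨h1, fun a ha => h2 a (Or.inl ha)⟩, ⟨h1, fun a ha => h2 a (Or.inr ha)⟩⟩

lemma SS_XH (imp : H → H → H) (one : H) : XH imp one = SS imp one [one] := by
  ext P
  simp only [XH, SS, Set.mem_setOf_eq, List.mem_singleton]
  exact ⟨fun h => ⟨h, fun a ha => ha ▸ h.1.1⟩, fun h => h.1⟩

lemma SS_phi (imp : H → H → H) (one : H) (a : H) :
    phi imp one a = SS imp one [a] := by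
  ext P
  simp only [phi, SS, Set.mem_setOf_eq, List.mem_singleton]
  exact ⟨fun h => ⟨h.1, fun x hx => hx ▸ h.2⟩, fun h => ⟨h.1, h.2 a rfl⟩⟩

lemma himp_SS {imp : H → H → H} {one : H} (hH : IsHilbert imp one)
    (l1 l2 : List H) :
    himp imp one (SS imp one l1) (SS imp one l2)
      = SS imp one (l2.map (fun b => l1.foldr imp b)) := by
  ext P
  constructor
  · rintro ⟨hP, hcond⟩
    refine ⟨hP, ?_⟩
    intro t ht
    obtain ⟨b, hb, rfl⟩ := List.mem_map.1 ht
    by_contra hnot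
    have hnd : ¬ Ded imp (P ∪ {x | x ∈ l1}) b := by
      intro hd
      exact hnot (filter_ded_closed hH hP.1 (fun x hx => hx)
        (ded_foldr l1 P hd))
    obtain ⟨Q, hQirr, hQcl, hbQ⟩ := separation hH hnd
    have hmem : Q ∈ SS imp one l2 :=
      hcond Q hQirr (fun x hx => hQcl _ (Ded.hyp (Or.inl hx)))
        ⟨hQirr, fun a ha => hQcl _ (Ded.hyp (Or.inr ha))⟩
    exact hbQ (hmem.2 b hb)
  · rintro ⟨hP, hfold⟩
    refine ⟨hP, ?_⟩
    intro Q hQ hPQ hQU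
    refine ⟨hQ, fun b hb => ?_⟩
    exact foldr_mp hH hQ.1 l1 (hPQ (hfold _ (List.mem_map_of_mem hb))) hQU.2

section SemiLattice

variable {B : Type*} {inf' : B → B → B} {imp' : B → B → B} {one' : B}

lemma sle_refl (hS : IsImpSL inf' imp' one') (a : B) : sle inf' a a := hS.2.2.1 a

lemma sle_antisymm (hS : IsImpSL inf' imp' one') {a b : B}
    (h1 : sle inf' a b) (h2 : sle inf' b a) : a = b := by
  unfold sle at h1 h2
  rw [← h1, hS.1, h2]

lemma sle_trans (hS : IsImpSL inf' imp' one') {a b c : B}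
    (h1 : sle inf' a b) (h2 : sle inf' b c) : sle inf' a c := by
  unfold sle at *
  calc inf' a c = inf' (inf' a b) c := by rw [h1]
    _ = inf' a (inf' b c) := hS.2.1 a b c
    _ = inf' a b := by rw [h2]
    _ = a := h1

lemma sle_one (hS : IsImpSL inf' imp' one') (a : B) : sle inf' a one' := hS.2.2.2.1 a

lemma inf_le_left (hS : IsImpSL inf' imp' one') (a b : B) : sle inf' (inf' a b) a := by
  unfold sle
  calc inf' (inf' a b) a = inf' a (inf' b a) := hS.2.1 a b a
    _ = inf' a (inf' a b) := by rw [hS.1 b a]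
    _ = inf' (inf' a a) b := (hS.2.1 a a b).symm
    _ = inf' a b := by rw [hS.2.2.1 a]

lemma inf_le_right (hS : IsImpSL inf' imp' one') (a b : B) : sle inf' (inf' a b) b := by
  rw [hS.1 a b]; exact inf_le_left hS b a

lemma le_inf (hS : IsImpSL inf' imp' one') {c a b : B}
    (h1 : sle inf' c a) (h2 : sle inf' c b) : sle inf' c (inf' a b) := by
  unfold sle at *
  calc inf' c (inf' a b) = inf' (inf' c a) b := (hS.2.1 c a b).symm
    _ = inf' c b := by rw [h1]
    _ = c := h2

lemma le_inf_iff (hS : IsImpSL inf' imp' one') {c a b : B} :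
    sle inf' c (inf' a b) ↔ sle inf' c a ∧ sle inf' c b :=
  ⟨fun h => ⟨sle_trans hS h (inf_le_left hS a b), sle_trans hS h (inf_le_right hS a b)⟩,
    fun h => le_inf hS h.1 h.2⟩

lemma resid (hS : IsImpSL inf' imp' one') {a b c : B} :
    sle inf' (inf' a b) c ↔ sle inf' a (imp' b c) := hS.2.2.2.2 a b c

lemma sle_ext (hS : IsImpSL inf' imp' one') {x y : B}
    (h : ∀ c, sle inf' c x ↔ sle inf' c y) : x = y :=
  sle_antisymm hS ((h x).1 (sle_refl hS x)) ((h y).2 (sle_refl hS y))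

lemma one_imp (hS : IsImpSL inf' imp' one') (c : B) : imp' one' c = c := by
  refine sle_ext hS fun a => ?_
  rw [← resid hS]
  constructor
  · intro h
    have : sle inf' a (inf' a one') := le_inf hS (sle_refl hS a) (sle_one hS a)
    exact sle_trans hS this h
  · intro h
    exact sle_trans hS (inf_le_left hS a one') h

lemma imp_one (hS : IsImpSL inf' imp' one') (c : B) : imp' c one' = one' := by
  refine sle_antisymm hS (sle_one hS _) ?_
  rw [← resid hS]
  exact sle_one hS _

lemma imp_curry (hS : IsImpSL inf' imp' one') (x y z : B) :
    imp' (inf' x y) z = imp' x (imp' y z) := by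
  refine sle_ext hS fun a => ?_
  rw [← resid hS, ← resid hS, ← resid hS, hS.2.1]

lemma imp_inf_distrib (hS : IsImpSL inf' imp' one') (x y z : B) :
    imp' x (inf' y z) = inf' (imp' x y) (imp' x z) := by
  refine sle_ext hS fun a => ?_
  rw [← resid hS, le_inf_iff hS, le_inf_iff hS, resid hS, resid hS]

end SemiLattice

/-- Finite meet of a list. -/
def linf {B : Type*} (inf' : B → B → B) (one' : B) (L : List B) : B :=
  L.foldr inf' one'

section Linf

variable {B : Type*} {inf' : B → B → B} {imp' : B → B → B} {one' : B}

lemma foldr_inf (hS : IsImpSL inf' imp' one') (L : List B) (c : B) :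
    L.foldr inf' c = inf' (linf inf' one' L) c := by
  induction L with
  | nil => show c = inf' one' c; rw [hS.1 one' c, hS.2.2.2.1]
  | cons a t ih =>
    show inf' a (t.foldr inf' c) = inf' (inf' a (linf inf' one' t)) c
    rw [ih, hS.2.1]

lemma linf_append (hS : IsImpSL inf' imp' one') (L1 L2 : List B) :
    linf inf' one' (L1 ++ L2) = inf' (linf inf' one' L1) (linf inf' one' L2) := by
  unfold linf
  rw [List.foldr_append, foldr_inf hS]
  rfl

lemma linf_le_mem (hS : IsImpSL inf' imp' one') {L : List B} {x : B} (hx : x ∈ L) :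
    sle inf' (linf inf' one' L) x := by
  induction L with
  | nil => simp at hx
  | cons a t ih =>
    rcases List.mem_cons.1 hx with h | h
    · subst h; exact inf_le_left hS _ _
    · exact sle_trans hS (inf_le_right hS a (linf inf' one' t)) (ih h)

lemma le_linf (hS : IsImpSL inf' imp' one') {L : List B} {c : B}
    (h : ∀ x ∈ L, sle inf' c x) : sle inf' c (linf inf' one' L) := by
  induction L with
  | nil => exact sle_one hS c
  | cons a t ih =>
    exact le_inf hS (h a (by simp)) (ih fun x hx => h x (by simp [hx]))

lemma foldr_imp (hS : IsImpSL inf' imp' one') (L : List B) (c : B) :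
    L.foldr imp' c = imp' (linf inf' one' L) c := by
  induction L with
  | nil => exact (one_imp hS c).symm
  | cons a t ih =>
    show imp' a (t.foldr imp' c) = _
    rw [ih, ← imp_curry hS]
    rfl

lemma linf_map_imp (hS : IsImpSL inf' imp' one') (x : B) (L : List B) :
    linf inf' one' (L.map (imp' x)) = imp' x (linf inf' one' L) := by
  induction L with
  | nil => exact (imp_one hS x).symm
  | cons a t ih =>
    show inf' (imp' x a) (linf inf' one' (t.map (imp' x))) = _
    rw [ih, ← imp_inf_distrib hS]
    rfl

end Linf

section Transfer

variable {H B : Type*} {imp : H → H → H} {one : H}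
variable {inf' : B → B → B} {imp' : B → B → B} {one' : B}
variable {h : H → B}

lemma transfer (hH : IsHilbert imp one) (hS : IsImpSL inf' imp' one')
    (hone : h one = one') (hhom : ∀ a b : H, h (imp a b) = imp' (h a) (h b))
    {S : Set H} {I : B} (hI : ∀ a ∈ S, sle inf' I (h a)) {b : H}
    (hd : Ded imp S b) : sle inf' I (h b) := by
  induction hd with
  | hyp hmem => exact hI _ hmem
  | ax1 a b => rw [hH.1 a b, hone]; exact sle_one hS I
  | ax2 a b c => rw [hH.2.1 a b c, hone]; exact sle_one hS I
  | mp ha hab iha ihab =>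
    rename_i x y
    rw [hhom] at ihab
    have h1 : sle inf' (inf' I (h x)) (h y) := (resid hS).2 ihab
    have h2 : sle inf' I (inf' I (h x)) := le_inf hS (sle_refl hS I) iha
    exact sle_trans hS h2 h1

lemma hb_le (hH : IsHilbert imp one) (hS : IsImpSL inf' imp' one')
    (hone : h one = one') (hhom : ∀ a b : H, h (imp a b) = imp' (h a) (h b))
    {l1 l2 : List H} (hsub : SS imp one l1 ⊆ SS imp one l2) :
    sle inf' (linf inf' one' (l1.map h)) (linf inf' one' (l2.map h)) := by
  refine le_linf hS ?_
  intro x hx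
  obtain ⟨b, hb, rfl⟩ := List.mem_map.1 hx
  have hded : Ded imp {x | x ∈ l1} b := by
    refine ded_of_subset hH ?_
    intro P hP
    exact ⟨hP.1, (hsub hP).2 b hb⟩
  exact transfer hH hS hone hhom
    (fun a ha => linf_le_mem hS (List.mem_map_of_mem (f := h) ha)) hded

lemma rep_eq (hH : IsHilbert imp one) (hS : IsImpSL inf' imp' one')
    (hone : h one = one') (hhom : ∀ a b : H, h (imp a b) = imp' (h a) (h b))
    {l1 l2 : List H} (heq : SS imp one l1 = SS imp one l2) :
    linf inf' one' (l1.map h) = linf inf' one' (l2.map h) :=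
  sle_antisymm hS (hb_le hH hS hone hhom (le_of_eq heq))
    (hb_le hH hS hone hhom (ge_of_eq heq))

lemma h_foldr (hS : IsImpSL inf' imp' one')
    (hhom : ∀ a b : H, h (imp a b) = imp' (h a) (h b))
    (l : List H) (b : H) :
    h (l.foldr imp b) = imp' (linf inf' one' (l.map h)) (h b) := by
  induction l with
  | nil => exact (one_imp hS (h b)).symm
  | cons a t ih =>
    show h (imp a (t.foldr imp b)) = _
    rw [hhom, ih, ← imp_curry hS]
    rfl

end Transfer

end FHAux


/-- Universal property of `L(H)`: for a Hilbert algebra `H`, an implicative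
semilattice `B`, and a Hilbert homomorphism `h : H → B` into the `{→,1}`-reduct
of `B`, there is a unique implicative-semilattice homomorphism
`h̄ : L(H) → B` with `h = h̄ ∘ φ_H`.  (This says that `L` is left adjoint to the
forgetful functor from implicative semilattices to Hilbert algebras.) -/
theorem stmt_6 {H B : Type*} (imp : H → H → H) (one : H)
    (hH : FH.IsHilbert imp one)
    (inf' : B → B → B) (imp' : B → B → B) (one' : B)
    (hS : FH.IsImpSL inf' imp' one')
    (h : H → B) (hone : h one = one')
    (hhom : ∀ a b : H, h (imp a b) = imp' (h a) (h b)) :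
    ∃! hbar : {U : Set (Set H) // FH.gen imp one U} → B,
      (∀ (U V : Set (Set H)) (hU : FH.gen imp one U) (hV : FH.gen imp one V)
          (hUV : FH.gen imp one (U ∩ V)),
          hbar ⟨U ∩ V, hUV⟩ = inf' (hbar ⟨U, hU⟩) (hbar ⟨V, hV⟩)) ∧
      (∀ (U V : Set (Set H)) (hU : FH.gen imp one U) (hV : FH.gen imp one V)
          (hUV : FH.gen imp one (FH.himp imp one U V)),
          hbar ⟨FH.himp imp one U V, hUV⟩ = imp' (hbar ⟨U, hU⟩) (hbar ⟨V, hV⟩)) ∧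
      (∀ hX : FH.gen imp one (FH.XH imp one), hbar ⟨FH.XH imp one, hX⟩ = one') ∧
      (∀ (a : H) (ha : FH.gen imp one (FH.phi imp one a)),
          hbar ⟨FH.phi imp one a, ha⟩ = h a) := by
  classical
  have rep : ∀ (U : Set (Set H)) (hU : FH.gen imp one U) (l : List H),
      U = FHAux.SS imp one l →
      FHAux.linf inf' one' ((hU.choose).map h) = FHAux.linf inf' one' (l.map h) := by
    intro U hU l he
    have spec := hU.choose_spec
    have heq : FHAux.SS imp one hU.choose = FHAux.SS imp one l := by
      have e0 : U = FHAux.SS imp one hU.choose := spec.2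
      exact e0.symm.trans he
    exact FHAux.rep_eq hH hS hone hhom heq
  refine ⟨fun x => FHAux.linf inf' one' ((x.2.choose).map h), ⟨?_, ?_, ?_, ?_⟩, ?_⟩
  · -- meets
    intro U V hU hV hUV
    obtain ⟨l1, hl1, e1⟩ := id hU
    obtain ⟨l2, hl2, e2⟩ := id hV
    have e1' : U = FHAux.SS imp one l1 := e1
    have e2' : V = FHAux.SS imp one l2 := e2
    have eint : U ∩ V = FHAux.SS imp one (l1 ++ l2) := by
      rw [e1', e2', FHAux.SS_inter]
    show FHAux.linf inf' one' ((hUV.choose).map h)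
        = inf' (FHAux.linf inf' one' ((hU.choose).map h))
            (FHAux.linf inf' one' ((hV.choose).map h))
    rw [rep _ hUV _ eint, rep _ hU _ e1', rep _ hV _ e2', List.map_append]
    exact FHAux.linf_append hS _ _
  · -- implications
    intro U V hU hV hUV
    obtain ⟨l1, hl1, e1⟩ := id hU
    obtain ⟨l2, hl2, e2⟩ := id hV
    have e1' : U = FHAux.SS imp one l1 := e1
    have e2' : V = FHAux.SS imp one l2 := e2
    have eh : FH.himp imp one U V
        = FHAux.SS imp one (l2.map (fun b => l1.foldr imp b)) := by
      rw [e1', e2', FHAux.himp_SS hH]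
    show FHAux.linf inf' one' ((hUV.choose).map h)
        = imp' (FHAux.linf inf' one' ((hU.choose).map h))
            (FHAux.linf inf' one' ((hV.choose).map h))
    rw [rep _ hUV _ eh, rep _ hU _ e1', rep _ hV _ e2']
    have hcomp : (l2.map (fun b => l1.foldr imp b)).map h
        = (l2.map h).map (imp' (FHAux.linf inf' one' (l1.map h))) := by
      rw [List.map_map, List.map_map]
      apply List.map_congr_left
      intro b _
      simp only [Function.comp]
      exact FHAux.h_foldr hS hhom l1 b
    rw [hcomp, FHAux.linf_map_imp hS]
  · -- top
    intro hX
    have e : FH.XH imp one = FHAux.SS imp one [one] := FHAux.SS_XH imp one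
    show FHAux.linf inf' one' ((hX.choose).map h) = one'
    rw [rep _ hX _ e]
    show inf' (h one) one' = one'
    rw [hS.2.2.2.1, hone]
  · -- phi
    intro a ha
    have e : FH.phi imp one a = FHAux.SS imp one [a] := FHAux.SS_phi imp one a
    show FHAux.linf inf' one' ((ha.choose).map h) = h a
    rw [rep _ ha _ e]
    show inf' (h a) one' = h a
    exact hS.2.2.2.1 (h a)
  · -- uniqueness
    intro g hg
    obtain ⟨g1, g2, g3, g4⟩ := hg
    have key : ∀ (l : List H), l ≠ [] →
        ∀ (p : FH.gen imp one (FHAux.SS imp one l)),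
          g ⟨FHAux.SS imp one l, p⟩ = FHAux.linf inf' one' (l.map h) := by
      intro l
      induction l with
      | nil => intro hn; exact absurd rfl hn
      | cons a t ih =>
        intro _ p
        cases t with
        | nil =>
          have e : FHAux.SS imp one [a] = FH.phi imp one a :=
            (FHAux.SS_phi imp one a).symm
          have p' : FH.gen imp one (FH.phi imp one a) := e ▸ p
          have hx : (⟨FHAux.SS imp one [a], p⟩ : {U // FH.gen imp one U})
              = ⟨FH.phi imp one a, p'⟩ := Subtype.ext e
          rw [hx, g4]
          show h a = inf' (h a) one'
          exact (hS.2.2.2.1 (h a)).symm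
        | cons b t' =>
          have ht : (b :: t') ≠ ([] : List H) := by simp
          have e : FHAux.SS imp one (a :: b :: t')
              = FH.phi imp one a ∩ FHAux.SS imp one (b :: t') := by
            rw [FHAux.SS_phi imp one a, FHAux.SS_inter]
            rfl
          have pphi : FH.gen imp one (FH.phi imp one a) :=
            ⟨[a], by simp, FHAux.SS_phi imp one a⟩
          have pt : FH.gen imp one (FHAux.SS imp one (b :: t')) := ⟨b :: t', ht, rfl⟩
          have pint : FH.gen imp one (FH.phi imp one a ∩ FHAux.SS imp one (b :: t')) :=
            e ▸ p
          have hx : (⟨FHAux.SS imp one (a :: b :: t'), p⟩ : {U // FH.gen imp one U})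
              = ⟨FH.phi imp one a ∩ FHAux.SS imp one (b :: t'), pint⟩ := Subtype.ext e
          rw [hx, g1 _ _ pphi pt pint, g4, ih ht pt]
          rfl
    funext x
    obtain ⟨U, hU⟩ := x
    obtain ⟨l, hl, e⟩ := id hU
    have e' : U = FHAux.SS imp one l := e
    have p : FH.gen imp one (FHAux.SS imp one l) := e' ▸ hU
    have hx : (⟨U, hU⟩ : {U // FH.gen imp one U}) = ⟨FHAux.SS imp one l, p⟩ :=
      Subtype.ext e'
    show g ⟨U, hU⟩ = FHAux.linf inf' one' ((hU.choose).map h)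
    rw [hx, key l hl p]
    exact (rep U hU l e').symm
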